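/- There exist constants C > 0 and T₀ ≥ 1 such that for every real τ ≥ T₀ there are pairwise distinct complex numbers λ₁, λ₂, λ₃ with (X−λ₁)(X−λ₂)(X−λ₃) = X³ + X + i·τ (as polynomials over ℂ), Re λ₁ < Re λ₂ < Re λ₃, and |λ_j − (μ_j·τ^{1/3} − τ^{−1/3}/(3·μ_j))| ≤ C·τ^{−2/3} for each j ∈ {1,2,3}. -/

import Mathlib

open Polynomial

/-- `μ_j = exp(−iπ/6 − 2ijπ/3)`. -/
noncomputable def mu (j : ℕ) : ℂ :=
  Complex.exp (-(Complex.I * (Real.pi : ℂ)) / 6 - 2 * Complex.I * (j : ℂ) * (Real.pi : ℂ) / 3)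

lemma mu_expform (j : ℕ) :
    mu j = Complex.exp (((-(Real.pi/6) - 2*j*Real.pi/3 : ℝ) : ℂ) * Complex.I) := by
  unfold mu; congr 1; push_cast; ring

lemma mu_abs (j : ℕ) : ‖mu j‖ = 1 := by
  rw [mu_expform]; exact Complex.norm_exp_ofReal_mul_I _

lemma mu_eq (j : ℕ) : mu j = ((Real.cos (-(Real.pi/6) - 2*j*Real.pi/3) : ℝ) : ℂ)
    + ((Real.sin (-(Real.pi/6) - 2*j*Real.pi/3) : ℝ) : ℂ) * Complex.I := by
  rw [mu_expform, Complex.exp_mul_I, Complex.ofReal_cos, Complex.ofReal_sin]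

lemma mu1 : mu 1 = -(Real.sqrt 3 : ℂ)/2 - Complex.I/2 := by
  rw [mu_eq]
  have h : (-(Real.pi/6) - 2*(1:ℕ)*Real.pi/3 : ℝ) = -(Real.pi - Real.pi/6) := by push_cast; ring
  rw [h, Real.cos_neg, Real.sin_neg, Real.cos_pi_sub, Real.sin_pi_sub,
    Real.cos_pi_div_six, Real.sin_pi_div_six]
  push_cast; ring

lemma mu2 : mu 2 = Complex.I := by
  rw [mu_eq]
  have h : (-(Real.pi/6) - 2*(2:ℕ)*Real.pi/3 : ℝ) = Real.pi/2 - 2*Real.pi := by push_cast; ring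
  rw [h, Real.cos_sub_two_pi, Real.sin_sub_two_pi, Real.cos_pi_div_two, Real.sin_pi_div_two]
  push_cast; ring

lemma mu3 : mu 3 = (Real.sqrt 3 : ℂ)/2 - Complex.I/2 := by
  rw [mu_eq]
  have h : (-(Real.pi/6) - 2*(3:ℕ)*Real.pi/3 : ℝ) = -(Real.pi/6) - 2*Real.pi := by push_cast; ring
  rw [h, Real.cos_sub_two_pi, Real.sin_sub_two_pi, Real.cos_neg, Real.sin_neg,
    Real.cos_pi_div_six, Real.sin_pi_div_six]
  push_cast; ring

lemma vieta (a b c : ℂ) (τ : ℝ) (h1 : a + b + c = 0) (h2 : a*b + a*c + b*c = 1)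
    (h3 : a*b*c = -(Complex.I * τ)) :
    (X - Polynomial.C a) * (X - Polynomial.C b) * (X - Polynomial.C c) =
      X ^ 3 + X + Polynomial.C (Complex.I * (τ : ℂ)) := by
  have h : (X - Polynomial.C a) * (X - Polynomial.C b) * (X - Polynomial.C c) =
      X^3 - Polynomial.C (a+b+c) * X^2 + Polynomial.C (a*b+a*c+b*c) * X
        - Polynomial.C (a*b*c) := by
    simp only [map_add, map_mul]; ring
  rw [h, h1, h2, h3]
  simp

set_option maxHeartbeats 1000000 in
lemma sum_expand (A B C2 DA DB DC s : ℂ) (hs : s ≠ 0) :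
    (A*s - DA/(3*s)) + (B*s - DB/(3*s)) + (C2*s - DC/(3*s))
      = ((A+B+C2)*(3*s^2) - (DA+DB+DC)) / (3*s) := by
  field_simp
  ring

set_option maxHeartbeats 1000000 in
lemma pair_expand (A B C2 DA DB DC s : ℂ) (hs : s ≠ 0) :
    (A*s - DA/(3*s))*(B*s - DB/(3*s)) + (A*s - DA/(3*s))*(C2*s - DC/(3*s))
      + (B*s - DB/(3*s))*(C2*s - DC/(3*s))
      = ((A*B+A*C2+B*C2)*(9*s^4) - 3*s^2*(A*DB+A*DC+B*DA+B*DC+C2*DA+C2*DB)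
          + (DA*DB+DA*DC+DB*DC)) / (9*s^2) := by
  field_simp
  ring

set_option maxHeartbeats 1000000 in
lemma prod_expand (A B C2 DA DB DC s : ℂ) (hs : s ≠ 0) :
    (A*s - DA/(3*s))*(B*s - DB/(3*s))*(C2*s - DC/(3*s))
      = ((A*B*C2)*(27*s^6) - 9*s^4*(A*B*DC+A*C2*DB+B*C2*DA)
          + 3*s^2*(A*DB*DC+B*DA*DC+C2*DA*DB) - DA*DB*DC) / (27*s^3) := by
  field_simp
  ring

set_option maxHeartbeats 1000000 in
lemma core (r s τ : ℂ) (hr : r^2 = 3) (hs : s ≠ 0)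
    (hkey : 27*s^6 - 27*τ*s^3 + 1 = 0) :
    ((-r/2 - Complex.I/2) * s - (-r/2 + Complex.I/2)/(3*s))
      + (Complex.I * s - (-Complex.I)/(3*s))
      + ((r/2 - Complex.I/2) * s - (r/2 + Complex.I/2)/(3*s)) = 0 ∧
    (((-r/2 - Complex.I/2) * s - (-r/2 + Complex.I/2)/(3*s)) * (Complex.I * s - (-Complex.I)/(3*s))
      + ((-r/2 - Complex.I/2) * s - (-r/2 + Complex.I/2)/(3*s)) * ((r/2 - Complex.I/2) * s - (r/2 + Complex.I/2)/(3*s))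
      + (Complex.I * s - (-Complex.I)/(3*s)) * ((r/2 - Complex.I/2) * s - (r/2 + Complex.I/2)/(3*s))) = 1 ∧
    (((-r/2 - Complex.I/2) * s - (-r/2 + Complex.I/2)/(3*s)) * (Complex.I * s - (-Complex.I)/(3*s))
      * ((r/2 - Complex.I/2) * s - (r/2 + Complex.I/2)/(3*s))) = -(Complex.I * τ) := by
  have hI : Complex.I^2 = -1 := Complex.I_sq
  have h3s : (3:ℂ)*s ≠ 0 := mul_ne_zero (by norm_num) hs
  have h9s : (9:ℂ)*s^2 ≠ 0 := mul_ne_zero (by norm_num) (pow_ne_zero _ hs)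
  have h27s : (27:ℂ)*s^3 ≠ 0 := mul_ne_zero (by norm_num) (pow_ne_zero _ hs)
  refine ⟨?_, ?_, ?_⟩
  · rw [sum_expand _ _ _ _ _ _ _ hs, div_eq_iff h3s]
    ring
  · rw [pair_expand _ _ _ _ _ _ _ hs, div_eq_iff h9s]
    have hE2 : (-r/2 - Complex.I/2)*Complex.I + (-r/2 - Complex.I/2)*(r/2 - Complex.I/2)
        + Complex.I*(r/2 - Complex.I/2) = 0 := by
      linear_combination (-1/4)*hr - (3/4)*hI
    have hM : (-r/2 - Complex.I/2)*(-Complex.I) + (-r/2 - Complex.I/2)*(r/2 + Complex.I/2)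
        + Complex.I*(-r/2 + Complex.I/2) + Complex.I*(r/2 + Complex.I/2)
        + (r/2 - Complex.I/2)*(-r/2 + Complex.I/2) + (r/2 - Complex.I/2)*(-Complex.I) = -3 := by
      linear_combination (-1/2)*hr + (3/2)*hI
    have hP : (-r/2 + Complex.I/2)*(-Complex.I) + (-r/2 + Complex.I/2)*(r/2 + Complex.I/2)
        + (-Complex.I)*(r/2 + Complex.I/2) = 0 := by
      linear_combination (-1/4)*hr - (3/4)*hI
    linear_combination 9*s^4*hE2 - 3*s^2*hM + hP
  · rw [prod_expand _ _ _ _ _ _ _ hs, div_eq_iff h27s]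
    have hE3 : (-r/2 - Complex.I/2)*Complex.I*(r/2 - Complex.I/2) = -Complex.I := by
      linear_combination (-Complex.I/4)*hr + (Complex.I/4)*hI
    have hM2 : (-r/2 - Complex.I/2)*Complex.I*(r/2 + Complex.I/2)
        + (-r/2 - Complex.I/2)*(r/2 - Complex.I/2)*(-Complex.I)
        + Complex.I*(r/2 - Complex.I/2)*(-r/2 + Complex.I/2) = 0 := by
      linear_combination (-Complex.I/4)*hr - (3*Complex.I/4)*hI
    have hM1 : (-r/2 - Complex.I/2)*(-Complex.I)*(r/2 + Complex.I/2)
        + Complex.I*(-r/2 + Complex.I/2)*(r/2 + Complex.I/2)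
        + (r/2 - Complex.I/2)*(-r/2 + Complex.I/2)*(-Complex.I) = 0 := by
      linear_combination (Complex.I/4)*hr + (3*Complex.I/4)*hI
    have hDP : (-r/2 + Complex.I/2)*(-Complex.I)*(r/2 + Complex.I/2) = Complex.I := by
      linear_combination (Complex.I/4)*hr - (Complex.I/4)*hI
    linear_combination 27*s^6*hE3 - 9*s^4*hM2 + 3*s^2*hM1 - hDP - Complex.I*hkey

lemma re_form (x y : ℝ) : (((x:ℝ):ℂ) + ((y:ℝ):ℂ)*Complex.I).re = x := by simp

lemma errbound (A D : ℂ) (s t u : ℝ) (hAD : A * D = 1) (hA : ‖A‖ = 1)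
    (hs : 0 < s) (ht : 0 < t) (hst : s ≤ t) (h1 : t - s ≤ u) (h2 : 1/s - 1/t ≤ t - s) :
    ‖(A * (s:ℂ) - D/(3*(s:ℂ))) - (A * (t:ℂ) - ((1/t : ℝ):ℂ)/(3*A))‖ ≤ 2*u := by
  have hA0 : A ≠ 0 := by intro h; rw [h] at hA; simp at hA
  have hs0 : (s:ℂ) ≠ 0 := by exact_mod_cast hs.ne'
  have ht0 : (t:ℂ) ≠ 0 := by exact_mod_cast ht.ne'
  have hD : A⁻¹ = D := inv_eq_of_mul_eq_one_right hAD
  have key : (A * (s:ℂ) - D/(3*(s:ℂ))) - (A * (t:ℂ) - ((1/t : ℝ):ℂ)/(3*A))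
      = A * ((s:ℂ) - (t:ℂ)) + (3*A)⁻¹ * (((1/t:ℝ):ℂ) - ((1/s:ℝ):ℂ)) := by
    rw [← hD]
    push_cast
    field_simp
    ring
  rw [key]
  have tri := norm_add_le (A * ((s:ℂ) - (t:ℂ)))
    ((3*A)⁻¹ * (((1/t:ℝ):ℂ) - ((1/s:ℝ):ℂ)))
  have e1 : ‖A * ((s:ℂ) - (t:ℂ))‖ = t - s := by
    rw [norm_mul, hA, one_mul, show ((s:ℂ) - (t:ℂ)) = ((s - t : ℝ):ℂ) by push_cast; ring,
      Complex.norm_real, Real.norm_eq_abs, abs_of_nonpos (by linarith)]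
    ring
  have hts : 1/t ≤ 1/s := one_div_le_one_div_of_le hs hst
  have e2 : ‖(3*A)⁻¹ * (((1/t:ℝ):ℂ) - ((1/s:ℝ):ℂ))‖ = (1/s - 1/t)/3 := by
    rw [norm_mul, norm_inv, norm_mul, hA,
      show (((1/t:ℝ):ℂ) - ((1/s:ℝ):ℂ)) = ((1/t - 1/s : ℝ):ℂ) by push_cast; ring,
      Complex.norm_real, Real.norm_eq_abs, abs_of_nonpos (by linarith)]
    have : ‖(3:ℂ)‖ = 3 := by
      rw [show (3:ℂ) = ((3:ℝ):ℂ) by norm_num, Complex.norm_real]; norm_num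
    rw [this]
    ring
  rw [e1, e2] at tri
  have hu0 : 0 ≤ t - s := by linarith
  linarith

set_option maxHeartbeats 2000000 in
theorem stmt_12 :
    ∃ C : ℝ, 0 < C ∧ ∃ T₀ : ℝ, 1 ≤ T₀ ∧ ∀ τ : ℝ, T₀ ≤ τ →
      ∃ l₁ l₂ l₃ : ℂ,
        (X - Polynomial.C l₁) * (X - Polynomial.C l₂) * (X - Polynomial.C l₃) =
          X ^ 3 + X + Polynomial.C (Complex.I * (τ : ℂ)) ∧
        l₁ ≠ l₂ ∧ l₁ ≠ l₃ ∧ l₂ ≠ l₃ ∧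
        l₁.re < l₂.re ∧ l₂.re < l₃.re ∧
        ‖(l₁ - (mu 1 * ((τ ^ ((1 : ℝ) / 3) : ℝ) : ℂ)
            - ((τ ^ (-(1 : ℝ) / 3) : ℝ) : ℂ) / (3 * mu 1)))‖ ≤ C * τ ^ (-(2 : ℝ) / 3) ∧
        ‖(l₂ - (mu 2 * ((τ ^ ((1 : ℝ) / 3) : ℝ) : ℂ)
            - ((τ ^ (-(1 : ℝ) / 3) : ℝ) : ℂ) / (3 * mu 2)))‖ ≤ C * τ ^ (-(2 : ℝ) / 3) ∧
        ‖(l₃ - (mu 3 * ((τ ^ ((1 : ℝ) / 3) : ℝ) : ℂ)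
            - ((τ ^ (-(1 : ℝ) / 3) : ℝ) : ℂ) / (3 * mu 3)))‖ ≤ C * τ ^ (-(2 : ℝ) / 3) := by
  refine ⟨2, by norm_num, 2, by norm_num, fun τ hτ => ?_⟩
  have hτ0 : (0:ℝ) < τ := by linarith
  -- real-side setup
  set d : ℝ := Real.sqrt (τ^2 - 4/27) with hddef
  have hd0 : 0 ≤ d := Real.sqrt_nonneg _
  have hd2 : d^2 = τ^2 - 4/27 := Real.sq_sqrt (by nlinarith)
  have hdτ : d ≤ τ := by nlinarith
  set σ : ℝ := (τ + d)/2 with hσdef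
  have hσ1 : 1 ≤ σ := by rw [hσdef]; linarith
  have hσpos : 0 < σ := by linarith
  have hσleτ : σ ≤ τ := by rw [hσdef]; linarith
  have hσkey : σ * (τ - σ) = 1/27 := by rw [hσdef]; nlinarith
  set s : ℝ := σ ^ ((1:ℝ)/3) with hsdef
  have hspos : 0 < s := Real.rpow_pos_of_pos hσpos _
  have hs3 : s^3 = σ := by
    rw [hsdef, ← Real.rpow_natCast (σ ^ ((1:ℝ)/3)) 3, ← Real.rpow_mul hσpos.le]
    norm_num
  have hs1 : 1 ≤ s := by
    rw [hsdef]
    calc (1:ℝ) = 1 ^ ((1:ℝ)/3) := by rw [Real.one_rpow]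
    _ ≤ σ ^ ((1:ℝ)/3) := Real.rpow_le_rpow (by norm_num) hσ1 (by norm_num)
  set t : ℝ := τ ^ ((1:ℝ)/3) with htdef
  have htpos : 0 < t := Real.rpow_pos_of_pos hτ0 _
  have ht3 : t^3 = τ := by
    rw [htdef, ← Real.rpow_natCast (τ ^ ((1:ℝ)/3)) 3, ← Real.rpow_mul hτ0.le]
    norm_num
  have ht1 : 1 ≤ t := by
    rw [htdef]
    calc (1:ℝ) = 1 ^ ((1:ℝ)/3) := by rw [Real.one_rpow]
    _ ≤ τ ^ ((1:ℝ)/3) := Real.rpow_le_rpow (by norm_num) (by linarith) (by norm_num)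
  have hst : s ≤ t := by
    rw [hsdef, htdef]; exact Real.rpow_le_rpow hσpos.le hσleτ (by norm_num)
  have hδ : τ - σ ≤ 1/27 := by nlinarith
  set u : ℝ := τ ^ (-(2:ℝ)/3) with hudef
  have hu : u = 1/t^2 := by
    rw [hudef, htdef, show -(2:ℝ)/3 = -((2:ℝ)/3) by norm_num, Real.rpow_neg hτ0.le, one_div]
    congr 1
    rw [← Real.rpow_natCast (τ ^ ((1:ℝ)/3)) 2, ← Real.rpow_mul hτ0.le]
    norm_num
  have hts : t - s ≤ u := by
    have h1 : (t - s)*t^2 ≤ t^3 - s^3 := by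
      nlinarith [mul_nonneg (mul_nonneg hspos.le (sub_nonneg.mpr hst))
        (by positivity : (0:ℝ) ≤ t + s)]
    have h2 : t^3 - s^3 ≤ 1/27 := by rw [ht3, hs3]; linarith
    rw [hu, le_div_iff₀ (by positivity)]
    nlinarith
  have hinv : 1/s - 1/t ≤ t - s := by
    have hst1 : (1:ℝ) ≤ s*t := by nlinarith
    rw [div_sub_div _ _ (ne_of_gt hspos) (ne_of_gt htpos), div_le_iff₀ (by positivity)]
    nlinarith [mul_nonneg (sub_nonneg.mpr hst) (sub_nonneg.mpr hst1)]
  have hτinv : τ ^ (-(1:ℝ)/3) = 1/t := by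
    rw [htdef, show -(1:ℝ)/3 = -((1:ℝ)/3) by norm_num, Real.rpow_neg hτ0.le]
    exact (one_div _).symm
  -- complex-side setup
  have hrC : ((Real.sqrt 3 : ℝ):ℂ)^2 = 3 := by
    have : (Real.sqrt 3)^2 = 3 := Real.sq_sqrt (by norm_num)
    exact_mod_cast this
  have hsC : ((s:ℝ):ℂ) ≠ 0 := by exact_mod_cast hspos.ne'
  have hkeyR : 27*(s:ℝ)^6 - 27*τ*s^3 + 1 = 0 := by
    have h6 : (s:ℝ)^6 = σ^2 := by rw [← hs3]; ring
    rw [h6, hs3]; linear_combination -27*hσkey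
  have hkeyC : 27*((s:ℝ):ℂ)^6 - 27*(τ:ℂ)*((s:ℝ):ℂ)^3 + 1 = 0 := by exact_mod_cast hkeyR
  obtain ⟨hc1, hc2, hc3⟩ := core ((Real.sqrt 3 : ℝ):ℂ) ((s:ℝ):ℂ) ((τ:ℝ):ℂ) hrC hsC hkeyC
  -- inverses of the mu's
  have hAD1 : mu 1 * (-(Real.sqrt 3 : ℂ)/2 + Complex.I/2) = 1 := by
    rw [mu1]; linear_combination (1/4)*hrC - (1/4)*Complex.I_sq
  have hAD2 : mu 2 * (-Complex.I) = 1 := by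
    rw [mu2]; linear_combination -Complex.I_sq
  have hAD3 : mu 3 * ((Real.sqrt 3 : ℂ)/2 + Complex.I/2) = 1 := by
    rw [mu3]; linear_combination (1/4)*hrC - (1/4)*Complex.I_sq
  -- real parts
  have hform1 : mu 1 * (s:ℂ) - (-(Real.sqrt 3 : ℂ)/2 + Complex.I/2)/(3*(s:ℂ))
      = ((-(Real.sqrt 3/2)*s + Real.sqrt 3/(6*s) : ℝ):ℂ)
        + ((-(s/2) - 1/(6*s) : ℝ):ℂ) * Complex.I := by
    rw [mu1]; push_cast; field_simp; ring
  have hform2 : mu 2 * (s:ℂ) - (-Complex.I)/(3*(s:ℂ))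
      = (((0:ℝ)):ℂ) + ((s + 1/(3*s) : ℝ):ℂ) * Complex.I := by
    rw [mu2]; push_cast; field_simp; ring
  have hform3 : mu 3 * (s:ℂ) - ((Real.sqrt 3 : ℂ)/2 + Complex.I/2)/(3*(s:ℂ))
      = ((Real.sqrt 3/2*s - Real.sqrt 3/(6*s) : ℝ):ℂ)
        + ((-(s/2) - 1/(6*s) : ℝ):ℂ) * Complex.I := by
    rw [mu3]; push_cast; field_simp; ring
  have hre1 : (mu 1 * (s:ℂ) - (-(Real.sqrt 3 : ℂ)/2 + Complex.I/2)/(3*(s:ℂ))).re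
      = -(Real.sqrt 3/2)*s + Real.sqrt 3/(6*s) := by rw [hform1, re_form]
  have hre2 : (mu 2 * (s:ℂ) - (-Complex.I)/(3*(s:ℂ))).re = 0 := by rw [hform2, re_form]
  have hre3 : (mu 3 * (s:ℂ) - ((Real.sqrt 3 : ℂ)/2 + Complex.I/2)/(3*(s:ℂ))).re
      = Real.sqrt 3/2*s - Real.sqrt 3/(6*s) := by rw [hform3, re_form]
  have h3p : (0:ℝ) < Real.sqrt 3 := Real.sqrt_pos.mpr (by norm_num)
  have hxkey : Real.sqrt 3/(6*s) < Real.sqrt 3/2*s := by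
    rw [div_lt_iff₀ (by positivity : (0:ℝ) < 6*s)]
    nlinarith [mul_pos h3p (by nlinarith : (0:ℝ) < 3*s^2 - 1)]
  have hlt12 : (mu 1 * (s:ℂ) - (-(Real.sqrt 3 : ℂ)/2 + Complex.I/2)/(3*(s:ℂ))).re
      < (mu 2 * (s:ℂ) - (-Complex.I)/(3*(s:ℂ))).re := by
    rw [hre1, hre2]; linarith
  have hlt23 : (mu 2 * (s:ℂ) - (-Complex.I)/(3*(s:ℂ))).re
      < (mu 3 * (s:ℂ) - ((Real.sqrt 3 : ℂ)/2 + Complex.I/2)/(3*(s:ℂ))).re := by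
    rw [hre2, hre3]; linarith
  -- the roots
  refine ⟨mu 1 * (s:ℂ) - (-(Real.sqrt 3 : ℂ)/2 + Complex.I/2)/(3*(s:ℂ)),
    mu 2 * (s:ℂ) - (-Complex.I)/(3*(s:ℂ)),
    mu 3 * (s:ℂ) - ((Real.sqrt 3 : ℂ)/2 + Complex.I/2)/(3*(s:ℂ)), ?_, ?_, ?_, ?_, ?_, ?_, ?_, ?_, ?_⟩
  · apply vieta
    · rw [mu1, mu2, mu3]; linear_combination hc1
    · rw [mu1, mu2, mu3]; linear_combination hc2
    · rw [mu1, mu2, mu3]; linear_combination hc3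
  · exact fun h => (ne_of_lt hlt12) (congrArg Complex.re h)
  · exact fun h => (ne_of_lt (lt_trans hlt12 hlt23)) (congrArg Complex.re h)
  · exact fun h => (ne_of_lt hlt23) (congrArg Complex.re h)
  · exact hlt12
  · exact hlt23
  · rw [hτinv]
    exact errbound (mu 1) (-(Real.sqrt 3 : ℂ)/2 + Complex.I/2) s t u hAD1 (mu_abs 1)
      hspos htpos hst hts hinv
  · rw [hτinv]
    exact errbound (mu 2) (-Complex.I) s t u hAD2 (mu_abs 2) hspos htpos hst hts hinv
  · rw [hτinv]
    exact errbound (mu 3) ((Real.sqrt 3 : ℂ)/2 + Complex.I/2) s t u hAD3 (mu_abs 3)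
      hspos htpos hst hts hinv
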